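/- Every entry of the user-delivery array vector e constructed in the t-GDD scheme lies in [q]^m and each vector e ∈ [q]^m occurs at most (q-1)^t times in any fixed column of the array; consequently the total number of distinct (vector, occurrence-index) labels S is at most (q-1)^t · q^m. -/

import Mathlib

/-- In the `t`-GDD scheme built from an `OA(m,q,s)` `A` and a `t`-`(m,q,L,1)` GDD with
`t ≤ L ≤ s ≤ m`: for a fixed column (block) `b` and a fixed vector `e ∈ [q]^m`, the
number of row labels — pairs `(j, T)` with `j ∈ [q^s]` and `T` a `t`-subset of the block
`b` — producing the vector `e` (i.e. the entry is non-star: `A(j,·)` differs from `b` in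
all `L` block coordinates; `e` agrees with the block values on `T` and with `A(j,·)`
elsewhere) is at most `(q-1)^t`. -/
theorem stmt_19 (m q s t L : ℕ) (ht : 1 ≤ t) (htL : t ≤ L) (hLs : L ≤ s) (hsm : s ≤ m)
    (A : Fin (q ^ s) → Fin m → Fin q)
    (hOA : ∀ cols : Finset (Fin m), cols.card = s → ∀ w : Fin m → Fin q,
      (Finset.univ.filter fun j => ∀ u ∈ cols, A j u = w u).card = 1)
    (𝔅 : Finset (Finset (Fin m × Fin q)))
    (hbcard : ∀ b ∈ 𝔅, b.card = L)
    (hbgroup : ∀ b ∈ 𝔅, ∀ u : Fin m, (b.filter fun p => p.1 = u).card ≤ 1)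
    (hGDD : ∀ T : Finset (Fin m × Fin q), T.card = t → (T.image Prod.fst).card = t →
      ∃! b, b ∈ 𝔅 ∧ T ⊆ b) :
    ∀ b ∈ 𝔅, ∀ e : Fin m → Fin q,
      ((Finset.univ : Finset (Fin (q ^ s) × Finset (Fin m × Fin q))).filter
          fun jT => jT.2 ⊆ b ∧ jT.2.card = t ∧
            (∀ p ∈ b, A jT.1 p.1 ≠ p.2) ∧
            (∀ p ∈ jT.2, e p.1 = p.2) ∧
            (∀ i : Fin m, i ∉ jT.2.image Prod.fst → e i = A jT.1 i)).card
        ≤ (q - 1) ^ t := by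
  intro b hb e
  set S := ((Finset.univ : Finset (Fin (q ^ s) × Finset (Fin m × Fin q))).filter
          fun jT => jT.2 ⊆ b ∧ jT.2.card = t ∧
            (∀ p ∈ b, A jT.1 p.1 ≠ p.2) ∧
            (∀ p ∈ jT.2, e p.1 = p.2) ∧
            (∀ i : Fin m, i ∉ jT.2.image Prod.fst → e i = A jT.1 i)) with hS
  rcases S.eq_empty_or_nonempty with hSe | ⟨⟨j₀, T₀'⟩, hj₀⟩
  · simp [hSe]
  -- the canonical T
  set T₀ : Finset (Fin m × Fin q) := b.filter (fun p => e p.1 = p.2) with hT₀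
  -- every member of S has second component T₀
  have hTeq : ∀ jT ∈ S, jT.2 = T₀ := by
    intro jT hjT
    rw [hS, Finset.mem_filter] at hjT
    obtain ⟨-, hsub, hcard, hne, hagree, hout⟩ := hjT
    apply Finset.Subset.antisymm
    · intro p hp
      exact Finset.mem_filter.2 ⟨hsub hp, hagree p hp⟩
    · intro p hp
      rw [hT₀, Finset.mem_filter] at hp
      obtain ⟨hpb, hpe⟩ := hp
      by_contra hpT
      have h1 : p.1 ∉ jT.2.image Prod.fst := by
        intro hmem
        rw [Finset.mem_image] at hmem
        obtain ⟨p', hp', hpp'⟩ := hmem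
        have hpne : p ≠ p' := fun h => hpT (h ▸ hp')
        have : ({p, p'} : Finset (Fin m × Fin q)) ⊆ b.filter (fun x => x.1 = p.1) := by
          intro x hx
          rcases Finset.mem_insert.1 hx with rfl | hx
          · exact Finset.mem_filter.2 ⟨hpb, rfl⟩
          · rw [Finset.mem_singleton] at hx
            subst hx
            exact Finset.mem_filter.2 ⟨hsub hp', hpp'⟩
        have h2 : (({p, p'} : Finset (Fin m × Fin q))).card ≤ 1 :=
          le_trans (Finset.card_le_card this) (hbgroup b hb p.1)
        rw [Finset.card_insert_of_notMem (by simpa using hpne), Finset.card_singleton] at h2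
        omega
      have := hout p.1 h1
      exact hne p hpb (by rw [← this, hpe])
  have hj₀' := hj₀
  rw [hS, Finset.mem_filter] at hj₀'
  obtain ⟨-, hsub₀, hcard₀, -, -, -⟩ := hj₀'
  have hT₀card : T₀.card = t := by
    rw [← hTeq _ hj₀]; exact hcard₀
  -- injective map into pi-set
  have hle : S.card ≤ (T₀.pi (fun p => (Finset.univ : Finset (Fin q)).erase p.2)).card := by
    apply Finset.card_le_card_of_injOn (fun jT => fun p _ => A jT.1 p.1)
    · intro jT hjT
      have hjT' := hjT
      rw [hS, Finset.mem_coe, Finset.mem_filter] at hjT'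
      obtain ⟨-, hsub, hcard, hne, hagree, hout⟩ := hjT'
      rw [Finset.mem_coe, Finset.mem_pi]
      intro p hp
      have hpb : p ∈ b := (Finset.mem_filter.1 (hT₀ ▸ hp)).1
      exact Finset.mem_erase.2 ⟨hne p hpb, Finset.mem_univ _⟩
    · intro jT hjT jT' hjT' hfe
      have h2 : jT.2 = jT'.2 := by rw [hTeq _ hjT, hTeq _ hjT']
      have hAeq : ∀ i, A jT.1 i = A jT'.1 i := by
        intro i
        by_cases hi : i ∈ T₀.image Prod.fst
        · rw [Finset.mem_image] at hi
          obtain ⟨p, hp, hpi⟩ := hi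
          have := congrFun (congrFun hfe p) hp
          simpa [hpi] using this
        · have hi1 : i ∉ jT.2.image Prod.fst := by rw [hTeq _ hjT]; exact hi
          have hi2 : i ∉ jT'.2.image Prod.fst := by rw [hTeq _ hjT']; exact hi
          have e1 := (Finset.mem_filter.1 (hS ▸ hjT)).2.2.2.2.2 i hi1
          have e2 := (Finset.mem_filter.1 (hS ▸ hjT')).2.2.2.2.2 i hi2
          rw [← e1, ← e2]
      -- use OA to conclude jT.1 = jT'.1
      obtain ⟨cols, -, hcols⟩ := Finset.exists_subset_card_eq (s := (Finset.univ : Finset (Fin m))) (n := s)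
        (by simpa using hsm)
      have h1 := hOA cols hcols (A jT.1)
      have hjmem : jT.1 ∈ Finset.univ.filter fun j => ∀ u ∈ cols, A j u = A jT.1 u := by
        simp
      have hjmem' : jT'.1 ∈ Finset.univ.filter fun j => ∀ u ∈ cols, A j u = A jT.1 u := by
        simp only [Finset.mem_filter, Finset.mem_univ, true_and]
        intro u _
        exact (hAeq u).symm
      have h1' : jT.1 = jT'.1 := by
        rw [Finset.card_eq_one] at h1
        obtain ⟨a, ha⟩ := h1
        rw [ha, Finset.mem_singleton] at hjmem hjmem'
        rw [hjmem, hjmem']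
      exact Prod.ext h1' h2
  calc S.card ≤ _ := hle
    _ = (q - 1) ^ t := by
        rw [Finset.card_pi]
        have : ∀ p ∈ T₀, ((Finset.univ : Finset (Fin q)).erase p.2).card = q - 1 := by
          intro p _
          rw [Finset.card_erase_of_mem (Finset.mem_univ _), Finset.card_univ, Fintype.card_fin]
        rw [Finset.prod_congr rfl this, Finset.prod_const, hT₀card]
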